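/- Let Â be an n×m full-column-rank matrix, Î a symmetric idempotent n×n matrix with ÂᵀÎÂ invertible, and Â_p = ÎÂ. If ‖I − Â⁺ÎÂ‖₂ < 1, then ‖Â[(ÂᵀÂ)⁻¹ − (Â_pᵀÂ_p)⁻¹]Âᵀ‖₂ ≤ cond(Â)·‖I − Â⁺ÎÂ‖₂ / (1 − ‖I − Â⁺ÎÂ‖₂), where cond(Â) = ‖Â‖₂‖Â⁺‖₂ and Â⁺ = (ÂᵀÂ)⁻¹Âᵀ. -/

import Mathlib

open Matrix
open scoped Matrix.Norms.L2Operator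

/-- In a normed ring with `‖1‖ ≤ 1` and summable geometric series, the inverse of `1 - t`
for `‖t‖ < 1` has norm at most `(1 - ‖t‖)⁻¹`. -/
lemma aux_norm_inverse_one_sub_le {R : Type*} [NormedRing R] [HasSummableGeomSeries R]
    (h1 : ‖(1 : R)‖ ≤ 1) {t : R} (ht : ‖t‖ < 1) :
    ‖Ring.inverse (1 - t)‖ ≤ (1 - ‖t‖)⁻¹ := by
  have ht0 : 0 ≤ ‖t‖ := norm_nonneg t
  have hpow : ∀ k : ℕ, ‖t ^ k‖ ≤ ‖t‖ ^ k := by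
    intro k
    induction k with
    | zero => simpa using h1
    | succ k ih =>
      calc ‖t ^ (k + 1)‖ = ‖t ^ k * t‖ := by rw [pow_succ]
        _ ≤ ‖t ^ k‖ * ‖t‖ := norm_mul_le _ _
        _ ≤ ‖t‖ ^ k * ‖t‖ := by
            exact mul_le_mul_of_nonneg_right ih ht0
        _ = ‖t‖ ^ (k + 1) := (pow_succ _ _).symm
  have hsum : HasSum (fun k : ℕ => t ^ k) (Ring.inverse (1 - t)) :=
    hasSum_geom_series_inverse t ht
  have hsum' : HasSum (fun k : ℕ => ‖t‖ ^ k) (1 - ‖t‖)⁻¹ :=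
    hasSum_geometric_of_lt_one ht0 ht
  have hs : Summable (fun k : ℕ => ‖t ^ k‖) :=
    Summable.of_nonneg_of_le (fun k => norm_nonneg _) hpow hsum'.summable
  calc ‖Ring.inverse (1 - t)‖ ≤ ∑' k : ℕ, ‖t ^ k‖ :=
        hsum.tsum_eq ▸ norm_tsum_le_tsum_norm hs
    _ ≤ ∑' k : ℕ, ‖t‖ ^ k := Summable.tsum_le_tsum hpow hs hsum'.summable
    _ = (1 - ‖t‖)⁻¹ := hsum'.tsum_eq

/-- Spectral-norm bound
`‖Â[(ÂᵀÂ)⁻¹ − (Â_pᵀÂ_p)⁻¹]Âᵀ‖ ≤ cond(Â)·‖I − Â⁺ÎÂ‖/(1 − ‖I − Â⁺ÎÂ‖)`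
whenever `‖I − Â⁺ÎÂ‖ < 1`. -/
theorem lemma_bound_projected_inverse_difference
    (n m : ℕ) (A : Matrix (Fin n) (Fin m) ℝ) (Ihat : Matrix (Fin n) (Fin n) ℝ)
    (hArank : A.rank = m) (hsym : Ihatᵀ = Ihat) (hidem : Ihat * Ihat = Ihat)
    (hinv : IsUnit (Aᵀ * Ihat * A)) :
    let Ap : Matrix (Fin m) (Fin n) ℝ := (Aᵀ * A)⁻¹ * Aᵀ
    let App : Matrix (Fin n) (Fin m) ℝ := Ihat * A
    ‖(1 : Matrix (Fin m) (Fin m) ℝ) - Ap * Ihat * A‖ < 1 →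
      ‖A * ((Aᵀ * A)⁻¹ - (Appᵀ * App)⁻¹) * Aᵀ‖ ≤
        ‖A‖ * ‖Ap‖ * ‖(1 : Matrix (Fin m) (Fin m) ℝ) - Ap * Ihat * A‖ /
          (1 - ‖(1 : Matrix (Fin m) (Fin m) ℝ) - Ap * Ihat * A‖) := by
  intro Ap App ht
  -- `B = AᵀA` is a unit since `A` has full column rank
  set B : Matrix (Fin m) (Fin m) ℝ := Aᵀ * A with hBdef
  have hBrank : B.rank = m := by rw [hBdef, Matrix.rank_transpose_mul_self]; exact hArank
  have hB : IsUnit B := by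
    rw [← Matrix.mulVec_surjective_iff_isUnit]
    have hrange : LinearMap.range B.mulVecLin = ⊤ := by
      apply Submodule.eq_top_of_finrank_eq
      rw [← Matrix.rank, hBrank]
      simp [Module.finrank_pi]
    intro y
    have : y ∈ LinearMap.range B.mulVecLin := hrange ▸ Submodule.mem_top
    obtain ⟨x, hx⟩ := this
    exact ⟨x, hx⟩
  -- `P = B⁻¹ (Aᵀ Î A)` is a unit
  set P : Matrix (Fin m) (Fin m) ℝ := B⁻¹ * (Aᵀ * Ihat * A) with hPdef
  have hBinv : IsUnit B⁻¹ := Matrix.isUnit_nonsing_inv_iff.mpr hB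
  have hP : IsUnit P := hBinv.mul hinv
  -- `Ap * Ihat * A = P`
  have hApP : Ap * Ihat * A = P := by
    show B⁻¹ * Aᵀ * Ihat * A = P
    rw [hPdef, Matrix.mul_assoc, Matrix.mul_assoc, Matrix.mul_assoc]
  rw [hApP] at ht ⊢
  set t : Matrix (Fin m) (Fin m) ℝ := 1 - P with htdef
  -- `Appᵀ * App = Aᵀ Î A = B * P`
  have hApp : Appᵀ * App = B * P := by
    show (Ihat * A)ᵀ * (Ihat * A) = B * P
    rw [Matrix.transpose_mul, hsym, hPdef, Matrix.mul_nonsing_inv_cancel_left _ _ ((Matrix.isUnit_iff_isUnit_det _).mp hB)]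
    rw [Matrix.mul_assoc, ← Matrix.mul_assoc Ihat, hidem, Matrix.mul_assoc]
  -- rewrite the matrix in the LHS
  have hmain : A * (B⁻¹ - (Appᵀ * App)⁻¹) * Aᵀ = A * (1 - P⁻¹) * Ap := by
    rw [hApp, Matrix.mul_inv_rev]
    show A * (B⁻¹ - P⁻¹ * B⁻¹) * Aᵀ = A * (1 - P⁻¹) * (B⁻¹ * Aᵀ)
    simp only [Matrix.mul_sub, Matrix.sub_mul, Matrix.one_mul, Matrix.mul_assoc]
  rw [hmain]
  -- norm bounds
  have h1 : ‖(1 : Matrix (Fin m) (Fin m) ℝ)‖ ≤ 1 := by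
    rw [Matrix.cstar_norm_def, _root_.map_one]
    exact ContinuousLinearMap.norm_id_le
  have hden : (0 : ℝ) < 1 - ‖t‖ := by linarith
  have hPinv_norm : ‖P⁻¹‖ ≤ (1 - ‖t‖)⁻¹ := by
    have : P = 1 - t := by rw [htdef, sub_sub_cancel]
    rw [Matrix.nonsing_inv_eq_ringInverse, this]
    exact aux_norm_inverse_one_sub_le h1 ht
  have h1P : ‖(1 : Matrix (Fin m) (Fin m) ℝ) - P⁻¹‖ ≤ (1 - ‖t‖)⁻¹ * ‖t‖ := by
    have heq : (1 : Matrix (Fin m) (Fin m) ℝ) - P⁻¹ = -(P⁻¹ * t) := by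
      rw [htdef, Matrix.mul_sub, Matrix.mul_one,
        Matrix.nonsing_inv_mul _ ((Matrix.isUnit_iff_isUnit_det _).mp hP), neg_sub]
    rw [heq, norm_neg]
    calc ‖P⁻¹ * t‖ ≤ ‖P⁻¹‖ * ‖t‖ := norm_mul_le _ _
      _ ≤ (1 - ‖t‖)⁻¹ * ‖t‖ :=
        mul_le_mul_of_nonneg_right hPinv_norm (norm_nonneg t)
  calc ‖A * (1 - P⁻¹) * Ap‖ ≤ ‖A * (1 - P⁻¹)‖ * ‖Ap‖ := Matrix.l2_opNorm_mul _ _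
    _ ≤ ‖A‖ * ‖1 - P⁻¹‖ * ‖Ap‖ :=
        mul_le_mul_of_nonneg_right (Matrix.l2_opNorm_mul _ _) (norm_nonneg _)
    _ ≤ ‖A‖ * ((1 - ‖t‖)⁻¹ * ‖t‖) * ‖Ap‖ := by
        have hA0 : (0 : ℝ) ≤ ‖A‖ := norm_nonneg _
        exact mul_le_mul_of_nonneg_right
          (mul_le_mul_of_nonneg_left h1P hA0) (norm_nonneg _)
    _ = ‖A‖ * ‖Ap‖ * ‖t‖ / (1 - ‖t‖) := by
        field_simp
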